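/- Let R be a commutative unital ring, let r, s, n be natural numbers, and let a_1, ..., a_s ∈ R. If M is an R-module with M ≅ R^r ⊕ ⊕_{i=1}^s R/Ra_i, then the n-th exterior power of M decomposes as Λ^n M ≅ R^{C(r,n)} ⊕ ⊕_{k=1}^n ⊕_{1 ≤ i_1 < ... < i_k ≤ s} ( R/⟨a_{i_1}, ..., a_{i_k}⟩ )^{C(r, n−k)}, where the inner direct sum is over all strictly increasing k-tuples (i_1, ..., i_k) with entries in {1,...,s}, ⟨a_{i_1}, ..., a_{i_k}⟩ denotes the ideal generated by a_{i_1}, ..., a_{i_k}, and C(·,·) denotes binomial coefficients. -/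

import Mathlib

open TensorProduct PiTensorProduct

/-- The submodule of alternating relations in the `n`-th tensor power. -/
abbrev ExtRel (R : Type*) [CommRing R] (M : Type*) [AddCommGroup M] [Module R M] (n : ℕ) :
    Submodule R (TensorPower R n M) :=
  Submodule.span R {x | ∃ m : Fin n → M,
    (∃ i j : Fin n, i ≠ j ∧ m i = m j) ∧ x = tprod R m}

/-- The `n`-th exterior power
`Λ^n M = T^n M / ⟨m_1⊗⋯⊗m_n : m_i = m_j for some i ≠ j⟩`. -/
abbrev ExtPow (R : Type*) [CommRing R] (M : Type*) [AddCommGroup M] [Module R M] (n : ℕ) :=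
  TensorPower R n M ⧸ ExtRel R M n

section Helpers

instance decStrictMono (n N : ℕ) : DecidablePred (StrictMono : (Fin n → Fin N) → Prop) :=
  fun f => decidable_of_iff (∀ a b : Fin n, a < b → f a < f b) Iff.rfl

def smEquivFinset (n : ℕ) (α : Type*) [LinearOrder α] [Fintype α] [DecidableEq α] :
    {v : Fin n → α // StrictMono v} ≃ {T : Finset α // T.card = n} where
  toFun v := ⟨Finset.univ.map ⟨v.1, v.2.injective⟩, by simp⟩
  invFun T := ⟨fun j => T.1.orderEmbOfFin T.2 j, (T.1.orderEmbOfFin T.2).strictMono⟩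
  left_inv v := by
    apply Subtype.ext
    have := (Finset.orderEmbOfFin_unique
      (f := v.1) (s := Finset.univ.map ⟨v.1, v.2.injective⟩) (by simp)
      (fun x => Finset.mem_map_of_mem _ (Finset.mem_univ x)) v.2)
    exact this.symm
  right_inv T := by
    apply Subtype.ext
    apply Finset.coe_injective
    have h1 : ↑(Finset.univ.map ⟨fun j => T.1.orderEmbOfFin T.2 j,
        (T.1.orderEmbOfFin T.2).strictMono.injective⟩) =
        Set.range (T.1.orderEmbOfFin T.2) := by
      rw [Finset.coe_map]
      simp only [Finset.coe_univ, Set.image_univ]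
      rfl
    rw [h1, Finset.range_orderEmbOfFin]

lemma range_smEquivFinset_symm {n : ℕ} {α : Type*} [LinearOrder α] [Fintype α] [DecidableEq α]
    (T : {T : Finset α // T.card = n}) :
    Set.range (((smEquivFinset n α).symm T).1) = ↑T.1 :=
  Finset.range_orderEmbOfFin _ _

lemma card_sm (m r : ℕ) :
    Fintype.card {v : Fin m → Fin r // StrictMono v} = r.choose m := by
  rw [Fintype.card_congr (smEquivFinset m (Fin r))]
  simp [Fintype.card_finset_len]

end Helpers

section Congr
variable {R : Type*} [CommRing R] {M N : Type*} [AddCommGroup M] [Module R M]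
  [AddCommGroup N] [Module R N] (n : ℕ)

noncomputable def extPowCongr (f : M ≃ₗ[R] N) : ExtPow R M n ≃ₗ[R] ExtPow R N n :=
  Submodule.Quotient.equiv _ _ (PiTensorProduct.congr fun _ : Fin n => f) (by
    rw [Submodule.map_span]
    congr 1
    ext x
    constructor
    · rintro ⟨y, ⟨m, ⟨i, j, hij, hm⟩, rfl⟩, rfl⟩
      exact ⟨fun i => f (m i), ⟨i, j, hij, by simp [hm]⟩, by simp [PiTensorProduct.congr_tprod]⟩
    · rintro ⟨m, ⟨i, j, hij, hm⟩, rfl⟩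
      refine ⟨tprod R (fun i => f.symm (m i)), ⟨_, ⟨i, j, hij, by simp [hm]⟩, rfl⟩, ?_⟩
      simp [PiTensorProduct.congr_tprod])

end Congr

section Core
variable {R : Type*} [CommRing R] (N n : ℕ) (b : Fin N → R)

abbrev SM (n N : ℕ) := {v : Fin n → Fin N // StrictMono v}

abbrev PMod := Π i : Fin N, R ⧸ Ideal.span {b i}

abbrev IdI (v : SM n N) : Ideal R := Ideal.span (Set.range fun j => b (v.1 j))

noncomputable def eGen (i : Fin N) : PMod N b := Pi.single i 1

lemma hle (v : SM n N) (j : Fin n) :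
    Ideal.span {b (v.1 j)} ≤
      Submodule.comap (LinearMap.id : R →ₗ[R] R) (IdI N n b v) := by
  refine Submodule.span_le.mpr (Set.singleton_subset_iff.mpr ?_)
  exact Submodule.subset_span ⟨j, rfl⟩

noncomputable def Lrow (v : SM n N) : PMod N b →ₗ[R] (Fin n → R ⧸ IdI N n b v) :=
  LinearMap.pi fun j =>
    (Submodule.mapQ _ _ LinearMap.id (hle N n b v j)) ∘ₗ LinearMap.proj (v.1 j)

noncomputable def detM (v : SM n N) :
    MultilinearMap R (fun _ : Fin n => PMod N b) (R ⧸ IdI N n b v) :=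
  ((Matrix.detRowAlternating :
      (Fin n → R ⧸ IdI N n b v) [⋀^Fin n]→ₗ[R ⧸ IdI N n b v] (R ⧸ IdI N n b v))
    |>.toMultilinearMap.restrictScalars R).compLinearMap fun _ => Lrow N n b v

lemma detM_apply (v : SM n N) (m : Fin n → PMod N b) :
    detM N n b v m = Matrix.det (Matrix.of fun i j => Lrow N n b v (m i) j) := rfl

noncomputable def PhiMap : ExtPow R (PMod N b) n →ₗ[R] Π v : SM n N, R ⧸ IdI N n b v :=
  LinearMap.pi fun v => Submodule.liftQ _ (PiTensorProduct.lift (detM N n b v)) (by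
    rw [Submodule.span_le]
    rintro x ⟨m, ⟨i, j, hij, hm⟩, rfl⟩
    simp only [SetLike.mem_coe, LinearMap.mem_ker, PiTensorProduct.lift.tprod]
    exact (Matrix.detRowAlternating).map_eq_zero_of_eq
      (fun i => Lrow N n b v (m i)) (by rw [hm]) hij)

noncomputable def wv (v : SM n N) : ExtPow R (PMod N b) n :=
  Submodule.Quotient.mk (tprod R fun j => eGen N b (v.1 j))

lemma smul_tprod_e (v : SM n N) (j : Fin n) :
    b (v.1 j) • (PiTensorProduct.tprod R fun j' => eGen N b (v.1 j')) = 0 := by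
  set m : Fin n → PMod N b := fun j' => eGen N b (v.1 j') with hmdef
  have h0 : b (v.1 j) • m j = 0 := by
    show b (v.1 j) • (Pi.single (v.1 j) 1 : PMod N b) = 0
    rw [← Pi.single_smul]
    have : b (v.1 j) • (1 : R ⧸ Ideal.span {b (v.1 j)}) = 0 := by
      have h1 : (1 : R ⧸ Ideal.span {b (v.1 j)}) =
          Submodule.Quotient.mk (1 : R) := rfl
      rw [h1, ← Submodule.Quotient.mk_smul, smul_eq_mul, mul_one]
      exact (Submodule.Quotient.mk_eq_zero _).mpr (Ideal.mem_span_singleton_self _)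
    rw [this, Pi.single_zero]
  calc b (v.1 j) • PiTensorProduct.tprod R m
      = b (v.1 j) • PiTensorProduct.tprod R (Function.update m j (m j)) := by
        rw [Function.update_eq_self]
    _ = PiTensorProduct.tprod R (Function.update m j (b (v.1 j) • m j)) :=
        ((PiTensorProduct.tprod R).map_update_smul _ _ _ _).symm
    _ = 0 := by
        rw [h0]
        exact (PiTensorProduct.tprod R).map_coord_zero j (by simp)

noncomputable def PsiMap : (Π v : SM n N, R ⧸ IdI N n b v) →ₗ[R] ExtPow R (PMod N b) n :=
  LinearMap.lsum R _ ℕ fun v => Submodule.liftQ _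
    (LinearMap.toSpanSingleton R _ (wv N n b v)) (by
      refine Ideal.span_le.mpr ?_
      rintro x ⟨j, rfl⟩
      simp only [SetLike.mem_coe, LinearMap.mem_ker, LinearMap.toSpanSingleton_apply]
      show b (v.1 j) • wv N n b v = 0
      unfold wv
      rw [← Submodule.Quotient.mk_smul, smul_tprod_e, Submodule.Quotient.mk_zero])

lemma Lrow_eGen (v : SM n N) (i' : Fin N) (j : Fin n) :
    Lrow N n b v (eGen N b i') j = if i' = v.1 j then 1 else 0 := by
  show Submodule.mapQ _ _ LinearMap.id (hle N n b v j)
      ((Pi.single i' 1 : PMod N b) (v.1 j)) = _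
  by_cases h : i' = v.1 j
  · rw [if_pos h]
    subst h
    rw [Pi.single_eq_same]
    have h1 : (1 : R ⧸ Ideal.span {b (v.1 j)}) = Submodule.Quotient.mk (1 : R) := rfl
    rw [h1, Submodule.mapQ_apply]
    rfl
  · rw [if_neg h, Pi.single_eq_of_ne (Ne.symm h), map_zero]

lemma PhiMap_wv (v' v : SM n N) :
    PhiMap N n b (wv N n b v') v = if v' = v then 1 else 0 := by
  have h1 : PhiMap N n b (wv N n b v') v
      = detM N n b v (fun j => eGen N b (v'.1 j)) := by
    have h2 : PhiMap N n b (wv N n b v') v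
        = PiTensorProduct.lift (detM N n b v)
            (PiTensorProduct.tprod R fun j => eGen N b (v'.1 j)) := rfl
    rw [h2, PiTensorProduct.lift.tprod]
  rw [h1, detM_apply]
  by_cases h : v' = v
  · subst h
    rw [if_pos rfl]
    have : (Matrix.of fun i j => Lrow N n b v' (eGen N b (v'.1 i)) j) = 1 := by
      ext i j
      rw [Matrix.of_apply, Lrow_eGen, Matrix.one_apply]
      simp [v'.2.injective.eq_iff]
    rw [this, Matrix.det_one]
  · rw [if_neg h]
    have hex : ∃ i, v'.1 i ∉ Set.range v.1 := by
      by_contra hc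
      push_neg at hc
      have hsub : Finset.univ.map ⟨v'.1, v'.2.injective⟩ ⊆
          Finset.univ.map ⟨v.1, v.2.injective⟩ := by
        intro x hx
        rw [Finset.mem_map] at hx ⊢
        obtain ⟨i, -, rfl⟩ := hx
        obtain ⟨j, hj⟩ := hc i
        exact ⟨j, Finset.mem_univ j, hj⟩
      have heq : Finset.univ.map ⟨v'.1, v'.2.injective⟩ =
          Finset.univ.map ⟨v.1, v.2.injective⟩ :=
        Finset.eq_of_subset_of_card_le hsub (by simp)
      exact h ((smEquivFinset n (Fin N)).injective (Subtype.ext heq))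
    obtain ⟨i, hi⟩ := hex
    refine Matrix.det_eq_zero_of_row_eq_zero i fun j => ?_
    rw [Matrix.of_apply, Lrow_eGen, if_neg]
    exact fun hh => hi ⟨j, hh.symm⟩

noncomputable def altMk : (PMod N b) [⋀^Fin n]→ₗ[R] ExtPow R (PMod N b) n where
  toMultilinearMap :=
    (ExtRel R (PMod N b) n).mkQ.compMultilinearMap (PiTensorProduct.tprod R)
  map_eq_zero_of_eq' m i j hm hij := by
    show Submodule.mkQ _ (PiTensorProduct.tprod R m) = 0
    rw [Submodule.mkQ_apply, Submodule.Quotient.mk_eq_zero]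
    exact Submodule.subset_span ⟨m, ⟨i, j, hij, hm⟩, rfl⟩

lemma altMk_apply (m : Fin n → PMod N b) :
    altMk N n b m = Submodule.Quotient.mk (PiTensorProduct.tprod R m) := rfl

lemma altMk_mem_span (m : Fin n → PMod N b) :
    altMk N n b m ∈ Submodule.span R (Set.range (wv N n b)) := by
  have hc : ∀ (i : Fin n) (i' : Fin N), ∃ c : R, Submodule.Quotient.mk c = m i i' :=
    fun i i' => Submodule.mkQ_surjective _ (m i i')
  choose c hc using hc
  have hm : m = fun i => ∑ i' : Fin N, c i i' • eGen N b i' := by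
    funext i
    rw [← Finset.univ_sum_single (m i)]
    refine Finset.sum_congr rfl fun i' _ => ?_
    rw [← hc i i']
    have h2 : (Submodule.Quotient.mk (c i i') : R ⧸ Ideal.span {b i'}) =
        c i i' • (1 : R ⧸ Ideal.span {b i'}) := by
      have h1 : (1 : R ⧸ Ideal.span {b i'}) = Submodule.Quotient.mk (1 : R) := rfl
      rw [h1, ← Submodule.Quotient.mk_smul, smul_eq_mul, mul_one]
    rw [h2, Pi.single_smul]
    rfl
  rw [hm]
  have hsum := (altMk N n b).toMultilinearMap.map_sum
    (g := fun (i : Fin n) (i' : Fin N) => c i i' • eGen N b i')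
  rw [show ((altMk N n b) fun i => ∑ i' : Fin N, c i i' • eGen N b i')
      = (altMk N n b).toMultilinearMap fun i => ∑ i' : Fin N, c i i' • eGen N b i' from rfl,
    hsum]
  refine Submodule.sum_mem _ fun u _ => ?_
  rw [show ((altMk N n b).toMultilinearMap fun i => c i (u i) • eGen N b (u i))
      = (altMk N n b).toMultilinearMap
        (fun i => c i (u i) • (fun i => eGen N b (u i)) i) from rfl,
    MultilinearMap.map_smul_univ]
  refine Submodule.smul_mem _ _ ?_
  by_cases hu : Function.Injective u
  · set σ := Tuple.sort u with hσ
    have hsm : StrictMono (u ∘ σ) :=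
      (Tuple.monotone_sort u).strictMono_of_injective (hu.comp σ.injective)
    have hcomp : (fun i => eGen N b (u i)) = (fun i => eGen N b (u (σ i))) ∘ σ.symm := by
      funext i
      simp
    show altMk N n b (fun i => eGen N b (u i)) ∈ _
    rw [hcomp]
    rw [show ((fun i => eGen N b (u (σ i))) ∘ σ.symm)
        = ((fun i => eGen N b ((u ∘ σ) i)) ∘ σ.symm) from rfl]
    rw [(altMk N n b).map_perm]
    have hwv : altMk N n b (fun i => eGen N b ((u ∘ σ) i)) = wv N n b ⟨u ∘ σ, hsm⟩ := rfl
    rw [hwv]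
    rcases Int.units_eq_one_or (Equiv.Perm.sign σ.symm) with hsgn | hsgn <;>
      rw [hsgn, Units.smul_def]
    · rw [Units.val_one, one_zsmul]
      exact Submodule.subset_span ⟨_, rfl⟩
    · rw [show ((-1 : ℤˣ) : ℤ) = -1 from rfl, neg_zsmul, one_zsmul]
      exact Submodule.neg_mem _ (Submodule.subset_span ⟨_, rfl⟩)
  · rw [Function.not_injective_iff] at hu
    obtain ⟨i, j, hij, hne⟩ := hu
    show altMk N n b (fun i => eGen N b (u i)) ∈ _
    rw [(altMk N n b).map_eq_zero_of_eq _ (by rw [hij]) hne]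
    exact Submodule.zero_mem _

lemma span_wv : Submodule.span R (Set.range (wv N n b)) = ⊤ := by
  rw [eq_top_iff]
  rintro x -
  obtain ⟨y, rfl⟩ := Submodule.mkQ_surjective _ x
  have hy : y ∈ Submodule.span R (Set.range (PiTensorProduct.tprod R)) := by
    rw [PiTensorProduct.span_tprod_eq_top]
    trivial
  refine Submodule.span_induction ?_ ?_ ?_ ?_ hy
  · rintro _ ⟨m, rfl⟩
    exact altMk_mem_span N n b m
  · simp
  · intro y z _ _ hy hz
    rw [map_add]
    exact Submodule.add_mem _ hy hz
  · intro r y _ hy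
    rw [map_smul]
    exact Submodule.smul_mem _ _ hy

lemma PsiMap_single (v : SM n N) (x : R ⧸ IdI N n b v) (xc : R)
    (hx : Submodule.Quotient.mk xc = x) :
    PsiMap N n b (Pi.single v x) = xc • wv N n b v := by
  rw [PsiMap, LinearMap.lsum_apply]
  rw [LinearMap.sum_apply]
  rw [Finset.sum_eq_single v]
  · simp only [LinearMap.comp_apply, LinearMap.coe_sum, LinearMap.proj_apply,
      Pi.single_eq_same]
    rw [← hx, Submodule.liftQ_apply, LinearMap.toSpanSingleton_apply]
  · intro v' _ hv'
    simp [Pi.single_eq_of_ne hv']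
  · simp

lemma PhiPsi : (PhiMap N n b) ∘ₗ (PsiMap N n b) = LinearMap.id := by
  refine LinearMap.ext fun x => ?_
  funext v
  have hx : ∀ v' : SM n N, ∃ cc : R, Submodule.Quotient.mk cc = x v' :=
    fun v' => Submodule.mkQ_surjective _ (x v')
  choose cc hcc using hx
  have hxs : x = ∑ v' : SM n N, Pi.single v' (x v') := by
    rw [Finset.univ_sum_single]
  have key : PhiMap N n b (PsiMap N n b x) =
      ∑ v' : SM n N, cc v' • PhiMap N n b (wv N n b v') := by
    conv_lhs => rw [hxs]
    rw [map_sum, map_sum]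
    exact Finset.sum_congr rfl fun v' _ => by
      rw [PsiMap_single N n b v' (x v') (cc v') (hcc v'), map_smul]
  rw [LinearMap.comp_apply, key, LinearMap.id_apply, Finset.sum_apply,
    Finset.sum_eq_single v]
  · rw [Pi.smul_apply, PhiMap_wv, if_pos rfl, ← hcc v]
    have h1 : (1 : R ⧸ IdI N n b v) = Submodule.Quotient.mk (1 : R) := rfl
    rw [h1, ← Submodule.Quotient.mk_smul, smul_eq_mul, mul_one]
  · intro v' _ hv'
    rw [Pi.smul_apply, PhiMap_wv, if_neg hv', smul_zero]
  · simp

lemma PsiSurj : Function.Surjective (PsiMap N n b) := by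
  rw [← LinearMap.range_eq_top]
  rw [eq_top_iff, ← span_wv N n b, Submodule.span_le]
  rintro _ ⟨v, rfl⟩
  exact ⟨Pi.single v 1, (PsiMap_single N n b v 1 1 rfl).trans (one_smul R _)⟩

noncomputable def extPowPi :
    ExtPow R (PMod N b) n ≃ₗ[R] Π v : SM n N, R ⧸ IdI N n b v :=
  LinearEquiv.ofLinear (PhiMap N n b) (PsiMap N n b) (PhiPsi N n b) (by
    refine LinearMap.ext fun x => ?_
    obtain ⟨y, rfl⟩ := PsiSurj N n b x
    rw [LinearMap.comp_apply, LinearMap.id_apply]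
    have := LinearMap.congr_fun (PhiPsi N n b) y
    rw [LinearMap.comp_apply, LinearMap.id_apply] at this
    rw [this])

end Core

section PiHelpers
variable (R : Type*) [CommRing R]

def sumPiLequiv {ι κ : Type*} (φ : ι ⊕ κ → Type*)
    [∀ x, AddCommGroup (φ x)] [∀ x, Module R (φ x)] :
    (Π x, φ x) ≃ₗ[R] (Π i, φ (Sum.inl i)) × (Π j, φ (Sum.inr j)) where
  toFun f := (fun i => f (Sum.inl i), fun j => f (Sum.inr j))
  invFun p x := Sum.rec p.1 p.2 x
  map_add' _ _ := rfl
  map_smul' _ _ := rfl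
  left_inv f := funext fun x => by cases x <;> rfl
  right_inv p := rfl

def prodPiSwapLequiv {A B : Type*} (C : B → Type*)
    [∀ x, AddCommGroup (C x)] [∀ x, Module R (C x)] :
    (Π p : A × B, C p.2) ≃ₗ[R] Π b : B, A → C b where
  toFun f b a := f (a, b)
  invFun g p := g p.2 p.1
  map_add' _ _ := rfl
  map_smul' _ _ := rfl
  left_inv f := funext fun p => rfl
  right_inv g := rfl

def piFinSuccLequiv (n : ℕ) (D : Fin (n + 1) → Type*)
    [∀ k, AddCommGroup (D k)] [∀ k, Module R (D k)] :
    (Π k, D k) ≃ₗ[R] D 0 × Π k : Fin n, D k.succ where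
  toFun f := (f 0, fun k => f k.succ)
  invFun p := Fin.cases p.1 p.2
  map_add' _ _ := rfl
  map_smul' _ _ := rfl
  left_inv f := funext fun k => by cases k using Fin.cases <;> simp
  right_inv p := by
    refine Prod.ext ?_ (funext fun k => ?_) <;> simp

end PiHelpers

section IndexEquiv

def E2 (r s n : ℕ) : {T : Finset (Fin (r + s)) // T.card = n} ≃
    {p : Finset (Fin r) × Finset (Fin s) // p.1.card + p.2.card = n} where
  toFun T := ⟨((T.1.map finSumFinEquiv.symm.toEmbedding).toLeft,
               (T.1.map finSumFinEquiv.symm.toEmbedding).toRight), by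
      rw [Finset.card_toLeft_add_card_toRight, Finset.card_map]
      exact T.2⟩
  invFun p := ⟨(p.1.1.disjSum p.1.2).map finSumFinEquiv.toEmbedding, by
      rw [Finset.card_map, Finset.card_disjSum]
      exact p.2⟩
  left_inv T := Subtype.ext (by
    show Finset.map finSumFinEquiv.toEmbedding
      (((T.1.map finSumFinEquiv.symm.toEmbedding).toLeft).disjSum
       ((T.1.map finSumFinEquiv.symm.toEmbedding).toRight)) = T.1
    rw [Finset.toLeft_disjSum_toRight, Finset.map_map]
    ext x
    simp)
  right_inv p := Subtype.ext (by
    have h : ((p.1.1.disjSum p.1.2).map finSumFinEquiv.toEmbedding).map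
        finSumFinEquiv.symm.toEmbedding = p.1.1.disjSum p.1.2 := by
      rw [Finset.map_map]
      ext x
      simp
    refine Prod.ext ?_ ?_ <;> simp [h])

def E3 (r s n : ℕ) : {p : Finset (Fin r) × Finset (Fin s) // p.1.card + p.2.card = n} ≃
    Σ k : Fin (n + 1),
      {T : Finset (Fin r) // T.card = n - k.1} × {T : Finset (Fin s) // T.card = k.1} where
  toFun p := ⟨⟨p.1.2.card, by have := p.2; omega⟩,
    ⟨p.1.1, by show p.1.1.card = n - p.1.2.card; have := p.2; omega⟩, ⟨p.1.2, rfl⟩⟩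
  invFun x := ⟨(x.2.1.1, x.2.2.1), by
    show x.2.1.1.card + x.2.2.1.card = n
    have h1 := x.1.isLt
    have h2 := x.2.1.2
    have h3 := x.2.2.2
    omega⟩
  left_inv p := Subtype.ext rfl
  right_inv x := by
    obtain ⟨⟨kv, hk⟩, ⟨T1, h1⟩, ⟨T2, h2⟩⟩ := x
    dsimp at h2
    subst h2
    rfl

def eIdx (r s n : ℕ) : SM n (r + s) ≃
    Σ k : Fin (n + 1), (SM (n - k.1) r × SM k.1 s) :=
  ((smEquivFinset n (Fin (r + s))).trans ((E2 r s n).trans (E3 r s n))).trans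
    (Equiv.sigmaCongrRight fun k => Equiv.prodCongr
      (smEquivFinset (n - k.1) (Fin r)).symm (smEquivFinset k.1 (Fin s)).symm)

lemma eIdx_symm_range (r s n : ℕ) (x : Σ k : Fin (n + 1), (SM (n - k.1) r × SM k.1 s)) :
    Set.range (((eIdx r s n).symm x).1) =
      ↑(((Finset.univ.map ⟨x.2.1.1, x.2.1.2.injective⟩).disjSum
         (Finset.univ.map ⟨x.2.2.1, x.2.2.2.injective⟩)).map finSumFinEquiv.toEmbedding) := by
  obtain ⟨k, u, w⟩ := x
  exact range_smEquivFinset_symm _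

lemma eIdx_ideal {R : Type*} [CommRing R] (r s n : ℕ) (a : Fin s → R)
    (x : Σ k : Fin (n + 1), (SM (n - k.1) r × SM k.1 s)) :
    Ideal.span (Set.range fun j =>
        (Fin.append (fun _ : Fin r => (0 : R)) a) (((eIdx r s n).symm x).1 j)) =
      Ideal.span (Set.range fun j => a (x.2.2.1 j)) := by
  set b : Fin (r + s) → R := Fin.append (fun _ : Fin r => (0 : R)) a with hb
  have hrange := eIdx_symm_range r s n x
  apply le_antisymm
  · rw [Ideal.span_le]
    rintro y ⟨j, rfl⟩
    have hj : (((eIdx r s n).symm x).1 j) ∈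
        (((Finset.univ.map ⟨x.2.1.1, x.2.1.2.injective⟩).disjSum
          (Finset.univ.map ⟨x.2.2.1, x.2.2.2.injective⟩)).map finSumFinEquiv.toEmbedding) := by
      rw [← Finset.mem_coe, ← hrange]
      exact ⟨j, rfl⟩
    rw [Finset.mem_map] at hj
    obtain ⟨y0, hy0, hy0e⟩ := hj
    show b (((eIdx r s n).symm x).1 j) ∈ _
    rw [← hy0e]
    cases y0 with
    | inl i =>
      have h0 : b (finSumFinEquiv.toEmbedding (Sum.inl i)) = 0 := by
        show b (finSumFinEquiv (Sum.inl i)) = 0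
        rw [finSumFinEquiv_apply_left, hb, Fin.append_left]
      rw [h0]
      exact Ideal.zero_mem _
    | inr i =>
      rw [Finset.inr_mem_disjSum, Finset.mem_map] at hy0
      obtain ⟨j', -, rfl⟩ := hy0
      have h0 : b (finSumFinEquiv.toEmbedding (Sum.inr (x.2.2.1 j'))) = a (x.2.2.1 j') := by
        show b (finSumFinEquiv (Sum.inr (x.2.2.1 j'))) = _
        rw [finSumFinEquiv_apply_right, hb, Fin.append_right]
      show b (finSumFinEquiv.toEmbedding (Sum.inr (x.2.2.1 j'))) ∈ _
      rw [h0]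
      exact Ideal.subset_span ⟨j', rfl⟩
  · rw [Ideal.span_le]
    rintro y ⟨j', rfl⟩
    have hmem : finSumFinEquiv (Sum.inr (x.2.2.1 j')) ∈
        Set.range (((eIdx r s n).symm x).1) := by
      rw [hrange, Finset.mem_coe, Finset.mem_map]
      exact ⟨Sum.inr (x.2.2.1 j'),
        Finset.inr_mem_disjSum.mpr (Finset.mem_map_of_mem _ (Finset.mem_univ j')), rfl⟩
    obtain ⟨j, hj⟩ := hmem
    show a (x.2.2.1 j') ∈ _
    have h0 : a (x.2.2.1 j') = b (((eIdx r s n).symm x).1 j) := by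
      rw [hj]
      show _ = b (finSumFinEquiv (Sum.inr (x.2.2.1 j')))
      rw [finSumFinEquiv_apply_right, hb, Fin.append_right]
    rw [h0]
    exact Ideal.subset_span ⟨j, rfl⟩

end IndexEquiv


/-- If `M ≅ R^r ⊕ ⊕_{i=1}^s R/Ra_i`, then
`Λ^n M ≅ R^{C(r,n)} ⊕ ⊕_{k=1}^n ⊕_{1 ≤ i_1 < … < i_k ≤ s}
(R/⟨a_{i_1},…,a_{i_k}⟩)^{C(r,n-k)}`, the inner sum being over strictly increasing
`k`-tuples (encoded as strictly monotone functions `Fin k → Fin s`).  Here `k : Fin n`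
encodes the index `k+1 ∈ {1,…,n}`. -/
theorem extPower_decomposition
    (R : Type) [CommRing R] (r s n : ℕ) (a : Fin s → R)
    (M : Type) [AddCommGroup M] [Module R M]
    (hM : Nonempty (M ≃ₗ[R] (Fin r → R) × (Π i : Fin s, R ⧸ Ideal.span {a i}))) :
    Nonempty (ExtPow R M n ≃ₗ[R]
      (Fin (r.choose n) → R) ×
      Π (k : Fin n) (v : {v : Fin (k.val + 1) → Fin s // StrictMono v}),
        Fin (r.choose (n - (k.val + 1))) →
          R ⧸ Ideal.span (Set.range fun j => a (v.1 j))) := by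
  obtain ⟨f₀⟩ := hM
  set b : Fin (r + s) → R := Fin.append (fun _ : Fin r => (0 : R)) a with hb
  have hbl : ∀ i : Fin r, Ideal.span {b (finSumFinEquiv.symm.symm (Sum.inl i))} = ⊥ := by
    intro i
    rw [Equiv.symm_symm, finSumFinEquiv_apply_left, hb, Fin.append_left]
    exact Submodule.span_zero_singleton R
  have hbr : ∀ i : Fin s,
      Ideal.span {b (finSumFinEquiv.symm.symm (Sum.inr i))} = Ideal.span {a i} := by
    intro i
    rw [Equiv.symm_symm, finSumFinEquiv_apply_right, hb, Fin.append_right]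
  let chainP : PMod (r + s) b ≃ₗ[R] (Fin r → R) × (Π i : Fin s, R ⧸ Ideal.span {a i}) :=
    (LinearEquiv.piCongrLeft' R (fun i => R ⧸ Ideal.span {b i}) finSumFinEquiv.symm).trans
    ((sumPiLequiv R _).trans
      (LinearEquiv.prodCongr
        (LinearEquiv.piCongrRight fun i => Submodule.quotEquivOfEqBot _ (hbl i))
        (LinearEquiv.piCongrRight fun i => Submodule.quotEquivOfEq _ _ (hbr i))))
  let f₁ : M ≃ₗ[R] PMod (r + s) b := f₀.trans chainP.symm
  haveI : IsEmpty (Fin ((0 : Fin (n + 1)).val)) := by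
    rw [Fin.val_zero]
    infer_instance
  have hJ0 : ∀ w : SM ((0 : Fin (n + 1)).val) s,
      Ideal.span (Set.range fun j => a (w.1 j)) = ⊥ := fun w => by
    rw [Set.range_eq_empty, Ideal.span_empty]
  have hcard0 : Fintype.card
      (SM ((0 : Fin (n + 1)).val) s × SM (n - (0 : Fin (n + 1)).val) r) = r.choose n := by
    rw [Fintype.card_prod, card_sm, card_sm, Fin.val_zero, Nat.choose_zero_right,
      Nat.sub_zero, one_mul]
  let left : (Π w : SM ((0 : Fin (n + 1)).val) s, (SM (n - (0 : Fin (n + 1)).val) r →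
      R ⧸ Ideal.span (Set.range fun j => a (w.1 j)))) ≃ₗ[R] (Fin (r.choose n) → R) :=
    (LinearEquiv.piCongrRight fun w => LinearEquiv.piCongrRight fun _ =>
        Submodule.quotEquivOfEqBot _ (hJ0 w)).trans
    (((LinearEquiv.curry (R := R) (M := R) (V := SM ((0 : Fin (n + 1)).val) s) (V₂ := SM (n - (0 : Fin (n + 1)).val) r)).symm).trans
      (LinearEquiv.funCongrLeft R R (Fintype.equivFinOfCardEq hcard0).symm))
  let right : (Π (k : Fin n), Π w : SM (Fin.succ k).val s, (SM (n - (Fin.succ k).val) r →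
      R ⧸ Ideal.span (Set.range fun j => a (w.1 j)))) ≃ₗ[R]
      (Π (k : Fin n) (v : {v : Fin (k.val + 1) → Fin s // StrictMono v}),
        Fin (r.choose (n - (k.val + 1))) →
          R ⧸ Ideal.span (Set.range fun j => a (v.1 j))) :=
    LinearEquiv.piCongrRight fun k => LinearEquiv.piCongrRight fun w =>
      LinearEquiv.funCongrLeft R _ (Fintype.equivFinOfCardEq (card_sm (n - (k.val + 1)) r)).symm
  refine ⟨(extPowCongr n f₁).trans <|
    (extPowPi (r + s) n b).trans <|
    (LinearEquiv.piCongrLeft' R (fun v : SM n (r + s) => R ⧸ IdI (r + s) n b v)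
      (eIdx r s n)).trans <|
    (LinearEquiv.piCongrRight fun x =>
      Submodule.quotEquivOfEq _ _ (eIdx_ideal r s n a x)).trans <|
    (LinearEquiv.piCurry R (fun (k : Fin (n + 1)) (p : SM (n - k.1) r × SM k.1 s) =>
      R ⧸ Ideal.span (Set.range fun j => a (p.2.1 j)))).trans <|
    (LinearEquiv.piCongrRight fun k => prodPiSwapLequiv R
      (fun w : SM k.1 s => R ⧸ Ideal.span (Set.range fun j => a (w.1 j)))).trans <|
    (piFinSuccLequiv R n (fun k => Π w : SM k.1 s, (SM (n - k.1) r →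
       R ⧸ Ideal.span (Set.range fun j => a (w.1 j))))).trans <|
    LinearEquiv.prodCongr left right⟩
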